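/- Let p be a prime, r = p^t with t ≥ 1, and α = Σ_{n≥0} T^{-r^n} ∈ 𝔽_p((1/T)). For n ≥ 1 set V_n = T^{r^{n-1}} and U_n = V_n·(T^{-1} + T^{-r} + ... + T^{-r^{n-1}}). Then |α − U_n/V_n| = |V_n|^{-r}, where |·| is the ultrametric absolute value with |T| > 1. -/

import Mathlib

open scoped Classical

private lemma coeff_coe_neg' {F : Type*} [Field F] (x : PowerSeries F) (i : ℤ) (hi : i < 0) :
    ((x : LaurentSeries F)).coeff i = 0 := by
  cases i with
  | ofNat m => exact absurd hi (not_lt.mpr (Int.natCast_nonneg m))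
  | negSucc m =>
    rw [HahnSeries.ofPowerSeries_apply, HahnSeries.embDomain_notin_range]
    simp


/-- The ultrametric absolute value on `𝔽_p((1/T))` (modelled as Laurent series
in `X = 1/T`): `|x| = c^(−order x)` for `x ≠ 0`, where `c = |T| > 1`, and `|0| = 0`. -/
noncomputable def absL {F : Type*} [Field F] (c : ℝ) (x : LaurentSeries F) : ℝ :=
  if x = 0 then 0 else c ^ (-x.order)

/-- For Mahler's example `α = Σ_{n≥0} T^{-rⁿ}`, with `Vₙ = T^{r^{n-1}}` and
`Uₙ = Vₙ·(T⁻¹ + T^{-r} + ⋯ + T^{-r^{n-1}})`, we have `|α − Uₙ/Vₙ| = |Vₙ|^{-r}`. -/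
theorem mahler_approx (p : ℕ) [hp : Fact p.Prime] (t : ℕ) (ht : 1 ≤ t)
    (r : ℕ) (hr : r = p ^ t) (c : ℝ) (hc : 1 < c)
    (α : LaurentSeries (ZMod p))
    (hα : α = ((PowerSeries.mk fun m =>
      if ∃ n : ℕ, m = r ^ n then (1 : ZMod p) else 0) : PowerSeries (ZMod p)))
    (n : ℕ) (hn : 1 ≤ n)
    (X V U : LaurentSeries (ZMod p))
    (hX : X = ((PowerSeries.X : PowerSeries (ZMod p)) : LaurentSeries (ZMod p)))
    (hV : V = (X⁻¹) ^ r ^ (n - 1))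
    (hU : U = V * ∑ k ∈ Finset.range n, X ^ r ^ k) :
    absL c (α - U / V) = (absL c V) ^ (-(r : ℤ)) := by
  have hr2 : 2 ≤ r := by
    rw [hr]
    calc 2 ≤ p := hp.out.two_le
    _ = p ^ 1 := (pow_one p).symm
    _ ≤ p ^ t := Nat.pow_le_pow_right hp.out.pos ht
  have hrpow : StrictMono fun k : ℕ => r ^ k :=
    fun a b h => Nat.pow_lt_pow_right (by omega) h
  have hXs : X = HahnSeries.single (1 : ℤ) (1 : ZMod p) := by
    rw [hX]; exact HahnSeries.ofPowerSeries_X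
  have hXinv : X⁻¹ = HahnSeries.single (-1 : ℤ) (1 : ZMod p) := by
    have h1 : HahnSeries.single (-1 : ℤ) (1 : ZMod p) * X = 1 := by
      rw [hXs, HahnSeries.single_mul_single]
      norm_num
    exact inv_eq_of_mul_eq_one_left h1
  have hVs : V = HahnSeries.single (-(r ^ (n-1) : ℤ)) (1 : ZMod p) := by
    rw [hV, hXinv, HahnSeries.single_pow, one_pow]
    congr 1
    push_cast [nsmul_eq_mul]
    ring
  have hV0 : V ≠ 0 := by
    rw [hVs]; exact HahnSeries.single_ne_zero one_ne_zero
  have hUV : U / V = ∑ k ∈ Finset.range n, X ^ r ^ k := by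
    rw [hU, mul_comm, mul_div_assoc, div_self hV0, mul_one]
  set g : PowerSeries (ZMod p) :=
    PowerSeries.mk (fun m => if ∃ k : ℕ, n ≤ k ∧ m = r ^ k then (1 : ZMod p) else 0) with hg
  have hdiff : α - U / V = (g : LaurentSeries (ZMod p)) := by
    rw [hUV, hα, hX]
    simp only [← map_pow, ← map_sum, ← map_sub]
    congr 1
    ext m
    simp only [map_sub, PowerSeries.coeff_mk, hg, Finset.sum_apply, map_sum,
      PowerSeries.coeff_X_pow]
    by_cases h1 : ∃ k : ℕ, n ≤ k ∧ m = r ^ k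
    · obtain ⟨k0, hk0n, hk0⟩ := h1
      rw [if_pos ⟨k0, hk0⟩, if_pos ⟨k0, hk0n, hk0⟩]
      have hsum : ∑ k ∈ Finset.range n, (if m = r ^ k then (1 : ZMod p) else 0) = 0 := by
        apply Finset.sum_eq_zero
        intro k hk
        rw [if_neg]
        rw [hk0]
        exact fun h => absurd (hrpow.injective h) (by
          have := Finset.mem_range.mp hk; omega)
      rw [hsum, sub_zero]
    · by_cases h2 : ∃ k, k < n ∧ m = r ^ k
      · obtain ⟨k0, hk0n, hk0⟩ := h2
        rw [if_pos ⟨k0, hk0⟩, if_neg h1]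
        have hsum : ∑ k ∈ Finset.range n, (if m = r ^ k then (1 : ZMod p) else 0) = 1 := by
          rw [Finset.sum_eq_single k0]
          · rw [if_pos hk0]
          · intro k hk hkne
            rw [if_neg]
            rw [hk0]
            exact fun h => hkne (hrpow.injective h).symm
          · intro h; exact absurd (Finset.mem_range.mpr hk0n) h
        rw [hsum, sub_self]
      · have hno : ¬∃ k : ℕ, m = r ^ k := by
          rintro ⟨k, hk⟩
          rcases lt_or_ge k n with h | h
          · exact h2 ⟨k, h, hk⟩
          · exact h1 ⟨k, h, hk⟩
        rw [if_neg hno, if_neg h1]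
        rw [Finset.sum_eq_zero, sub_zero]
        intro k hk
        rw [if_neg (fun h => hno ⟨k, h⟩)]
  have hgcoeff : ((g : LaurentSeries (ZMod p))).coeff ((r ^ n : ℕ) : ℤ) = 1 := by
    rw [LaurentSeries.coeff_coe_powerSeries, hg, PowerSeries.coeff_mk,
      if_pos ⟨n, le_refl n, rfl⟩]
  have hd0 : (g : LaurentSeries (ZMod p)) ≠ 0 := by
    intro h
    rw [h] at hgcoeff
    simp at hgcoeff
  have hord : ((g : LaurentSeries (ZMod p))).order = ((r ^ n : ℕ) : ℤ) := by
    apply le_antisymm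
    · exact HahnSeries.order_le_of_coeff_ne_zero (by rw [hgcoeff]; exact one_ne_zero)
    · have hne := HahnSeries.coeff_order_eq_zero.not.2 hd0
      rcases lt_or_ge ((g : LaurentSeries (ZMod p))).order 0 with h | h
      · exact absurd (coeff_coe_neg' g _ h) hne
      · obtain ⟨m, hm⟩ := Int.eq_ofNat_of_zero_le h
        rw [hm] at hne ⊢
        rw [LaurentSeries.coeff_coe_powerSeries, hg, PowerSeries.coeff_mk] at hne
        by_cases hm : ∃ k : ℕ, n ≤ k ∧ m = r ^ k
        · obtain ⟨k, hkn, rfl⟩ := hm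
          exact_mod_cast Nat.pow_le_pow_right (by omega) hkn
        · rw [if_neg hm] at hne; exact absurd rfl hne
  have hordV : V.order = -(r ^ (n-1) : ℤ) := by
    rw [hVs]; exact HahnSeries.order_single one_ne_zero
  have hc0 : c ≠ 0 := by positivity
  rw [hdiff, absL, absL, if_neg hd0, if_neg hV0, hord, hordV, neg_neg, ← zpow_mul]
  congr 1
  have hnn : ((r : ℤ)) ^ (n - 1) * (r : ℤ) = (r : ℤ) ^ n := by
    rw [← pow_succ]; congr 1; omega
  push_cast
  rw [← hnn]
  ring
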